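/- Let V, W be two distinct nontrivial germs of analytic subsets of (ℂ², 0) (i.e. V ≠ {0} ≠ W and V ≠ W as germs), and let ψ ∈ Diff(ℂ²,0) satisfy V ∪ W ⊆ Fix(ψ). Then ψ is tangent to the identity, i.e. D₀ψ = id. -/

import Mathlib

open Topology Filter

/-- `V` is (the germ at `0` of) an analytic subset of `(ℂ², 0)`: near `0` it is the common
zero locus of finitely many holomorphic functions. -/
def IsAnalyticGermAtZero (V : Set (ℂ × ℂ)) : Prop :=
  ∃ U ∈ 𝓝 (0 : ℂ × ℂ), ∃ (N : ℕ) (f : Fin N → ℂ × ℂ → ℂ),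
    (∀ i, ∀ x ∈ U, AnalyticAt ℂ (f i) x) ∧ V ∩ U = {x ∈ U | ∀ i, f i x = 0}

/-- A nonzero continuous linear functional on `ℂ²` is the first component of a continuous
linear automorphism of `ℂ²`. -/
lemma exists_equiv_fst_eq (φ : (ℂ × ℂ) →L[ℂ] ℂ) (hφ : φ ≠ 0) :
    ∃ i : (ℂ × ℂ) ≃L[ℂ] ℂ × ℂ, ∀ z, (i z).1 = φ z := by
  set a : ℂ := φ (1, 0) with ha
  set b : ℂ := φ (0, 1) with hb
  have hφz : ∀ z : ℂ × ℂ, φ z = a * z.1 + b * z.2 := by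
    intro z
    have hz : z = z.1 • ((1 : ℂ), (0 : ℂ)) + z.2 • ((0 : ℂ), (1 : ℂ)) := by
      ext <;> simp
    conv_lhs => rw [hz, map_add, map_smul, map_smul, smul_eq_mul, smul_eq_mul]
    rw [← ha, ← hb]
    ring
  have hab : a ≠ 0 ∨ b ≠ 0 := by
    by_contra hcon
    push_neg at hcon
    apply hφ
    ext z
    · simp [hφz, hcon.1, hcon.2]
    · simp [hφz, hcon.1, hcon.2]
  rcases eq_or_ne b 0 with hb0 | hb0
  · -- b = 0, so a ≠ 0
    have ha0 : a ≠ 0 := hab.resolve_right (not_not.mpr hb0)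
    refine ⟨ContinuousLinearEquiv.equivOfInverse
      (φ.prod (ContinuousLinearMap.snd ℂ ℂ ℂ))
      ((a⁻¹ • ContinuousLinearMap.fst ℂ ℂ ℂ).prod (ContinuousLinearMap.snd ℂ ℂ ℂ))
      (fun z => ?_) (fun z => ?_), fun z => ?_⟩
    · refine Prod.ext ?_ ?_ <;>
        simp [ContinuousLinearMap.prod_apply, hφz, hb0] <;> field_simp
    · refine Prod.ext ?_ ?_ <;>
        simp [ContinuousLinearMap.prod_apply, hφz, hb0] <;> field_simp
    · simp [ContinuousLinearEquiv.equivOfInverse_apply, ContinuousLinearMap.prod_apply]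
  · -- b ≠ 0
    refine ⟨ContinuousLinearEquiv.equivOfInverse
      (φ.prod (ContinuousLinearMap.fst ℂ ℂ ℂ))
      ((ContinuousLinearMap.snd ℂ ℂ ℂ).prod
        (b⁻¹ • ContinuousLinearMap.fst ℂ ℂ ℂ - (b⁻¹ * a) • ContinuousLinearMap.snd ℂ ℂ ℂ))
      (fun z => ?_) (fun z => ?_), fun z => ?_⟩
    · refine Prod.ext ?_ ?_ <;>
        simp [ContinuousLinearMap.prod_apply, hφz] <;> field_simp <;> ring
    · refine Prod.ext ?_ ?_ <;>
        simp [ContinuousLinearMap.prod_apply, hφz] <;> field_simp <;> ring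
    · simp [ContinuousLinearEquiv.equivOfInverse_apply, ContinuousLinearMap.prod_apply]

/-- If `V` and `W` are two distinct nontrivial germs of analytic subsets of `(ℂ², 0)` and
`ψ ∈ Diff(ℂ²,0)` fixes `V ∪ W` pointwise, then `ψ` is tangent to the identity. -/
theorem tangent_to_identity_of_two_fixed_curves (psi : ℂ × ℂ → ℂ × ℂ)
    (hpsi : AnalyticAt ℂ psi 0) (hpsi0 : psi 0 = 0)
    (hinj : ∃ U ∈ 𝓝 (0 : ℂ × ℂ), Set.InjOn psi U)
    (V W : Set (ℂ × ℂ)) (h0V : (0 : ℂ × ℂ) ∈ V) (h0W : (0 : ℂ × ℂ) ∈ W)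
    (hVan : IsAnalyticGermAtZero V) (hWan : IsAnalyticGermAtZero W)
    (hVnt : ∀ U ∈ 𝓝 (0 : ℂ × ℂ), ∃ x ∈ V ∩ U, x ≠ 0)
    (hWnt : ∀ U ∈ 𝓝 (0 : ℂ × ℂ), ∃ x ∈ W ∩ U, x ≠ 0)
    (hVW : ¬ ∀ᶠ x in 𝓝 (0 : ℂ × ℂ), x ∈ V ↔ x ∈ W)
    (hfix : ∀ᶠ x in 𝓝 (0 : ℂ × ℂ), x ∈ V ∪ W → psi x = x) :
    fderiv ℂ psi 0 = ContinuousLinearMap.id ℂ (ℂ × ℂ) := by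
  by_contra hA
  -- the difference `g z = psi z - z` is analytic with nonzero derivative `B` at `0`
  set g : ℂ × ℂ → ℂ × ℂ := fun z => psi z - z with hgdef
  have hganal : AnalyticAt ℂ g 0 := hpsi.sub analyticAt_id
  have hg0 : g 0 = 0 := by simp [hgdef, hpsi0]
  set B : (ℂ × ℂ) →L[ℂ] ℂ × ℂ :=
    fderiv ℂ psi 0 - ContinuousLinearMap.id ℂ (ℂ × ℂ) with hBdef
  have hgB : HasFDerivAt g B 0 := hpsi.differentiableAt.hasFDerivAt.sub (hasFDerivAt_id 0)
  have hBne : B ≠ 0 := fun h => hA (by rwa [hBdef, sub_eq_zero] at h)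
  obtain ⟨w, hw⟩ : ∃ w, B w ≠ 0 := by
    by_contra hcon
    push_neg at hcon
    exact hBne (ContinuousLinearMap.ext fun z => by simp [hcon z])
  have hw12 : (B w).1 ≠ 0 ∨ (B w).2 ≠ 0 := by
    by_contra hcon
    push_neg at hcon
    exact hw (Prod.ext hcon.1 hcon.2)
  obtain ⟨ℓ, hℓ⟩ : ∃ ℓ : (ℂ × ℂ) →L[ℂ] ℂ, ℓ (B w) ≠ 0 := by
    rcases hw12 with h | h
    · exact ⟨ContinuousLinearMap.fst ℂ ℂ ℂ, h⟩
    · exact ⟨ContinuousLinearMap.snd ℂ ℂ ℂ, h⟩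
  -- the scalar function `hfun = ℓ ∘ g` is analytic with nonzero derivative `φ` at `0`
  set φ : (ℂ × ℂ) →L[ℂ] ℂ := ℓ.comp B with hφdef
  have hφne : φ ≠ 0 := by
    intro hc
    apply hℓ
    have : φ w = 0 := by rw [hc]; rfl
    simpa [hφdef] using this
  set hfun : ℂ × ℂ → ℂ := fun z => ℓ (g z) with hhdef
  have hhanal : AnalyticAt ℂ hfun 0 := (ℓ.analyticAt (g 0)).comp hganal
  have hh0 : hfun 0 = 0 := by simp [hhdef, hg0]
  have hhB : HasFDerivAt hfun φ 0 := ℓ.hasFDerivAt.comp 0 hgB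
  -- extend `φ` to a linear automorphism and `hfun` to a biholomorphism `Φ` near `0`
  obtain ⟨i, hi⟩ := exists_equiv_fst_eq φ hφne
  set Φ : ℂ × ℂ → ℂ × ℂ := fun z => (hfun z, (i z).2) with hΦdef
  have hΦanal : AnalyticAt ℂ Φ 0 := by
    refine hhanal.prod ?_
    exact ((ContinuousLinearMap.snd ℂ ℂ ℂ).comp (i : (ℂ × ℂ) →L[ℂ] ℂ × ℂ)).analyticAt 0
  have hΦ0 : Φ 0 = 0 := by
    simp [hΦdef, hh0]
  have hieq : φ.prod ((ContinuousLinearMap.snd ℂ ℂ ℂ).comp (i : (ℂ × ℂ) →L[ℂ] ℂ × ℂ))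
      = (i : (ℂ × ℂ) →L[ℂ] ℂ × ℂ) := by
    refine ContinuousLinearMap.ext fun z => ?_
    refine Prod.ext ?_ ?_
    · simp [ContinuousLinearMap.prod_apply, (hi z).symm]
    · simp [ContinuousLinearMap.prod_apply]
  have hΦD : HasFDerivAt Φ (i : (ℂ × ℂ) →L[ℂ] ℂ × ℂ) 0 := by
    have h1 := hhB.prodMk
      ((ContinuousLinearMap.snd ℂ ℂ ℂ).comp (i : (ℂ × ℂ) →L[ℂ] ℂ × ℂ)).hasFDerivAt
    rwa [hieq] at h1
  have hΦstrict : HasStrictFDerivAt Φ (i : (ℂ × ℂ) →L[ℂ] ℂ × ℂ) 0 := by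
    have h1 := hΦanal.hasStrictFDerivAt
    rwa [hΦD.fderiv] at h1
  set P := HasStrictFDerivAt.toOpenPartialHomeomorph Φ hΦstrict with hPdef
  have hPcoe : ⇑P = Φ := HasStrictFDerivAt.toOpenPartialHomeomorph_coe hΦstrict
  have hP0 : (0 : ℂ × ℂ) ∈ P.source := HasStrictFDerivAt.mem_toOpenPartialHomeomorph_source hΦstrict
  -- the local inverse of `Φ` is analytic at `0`
  obtain ⟨p, hp⟩ := id hΦanal
  have hpP : HasFPowerSeriesAt (⇑P) p 0 := by rwa [hPcoe]
  have hp1 : p 1 = (continuousMultilinearCurryFin1 ℂ (ℂ × ℂ) (ℂ × ℂ)).symm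
      (i : (ℂ × ℂ) →L[ℂ] ℂ × ℂ) := by
    have h1 := hp.fderiv_eq
    have h2 : continuousMultilinearCurryFin1 ℂ (ℂ × ℂ) (ℂ × ℂ) (p 1)
        = (i : (ℂ × ℂ) →L[ℂ] ℂ × ℂ) := by rw [← h1, hΦD.fderiv]
    rw [← h2]
    simp
  have hsymm := P.hasFPowerSeriesAt_symm hP0 hpP hp1
  have hP00 : P 0 = 0 := by rw [show (P : ℂ × ℂ → ℂ × ℂ) 0 = Φ 0 from by rw [hPcoe], hΦ0]
  rw [hP00] at hsymm
  have hsymm_anal : AnalyticAt ℂ (⇑P.symm) 0 := ⟨_, hsymm⟩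
  -- the analytic parametrization of the zero set of `hfun`
  set γ : ℂ → ℂ × ℂ := fun t => P.symm (0, t) with hγdef
  have hγanal : AnalyticAt ℂ γ 0 := by
    have h1 : AnalyticAt ℂ (fun t : ℂ => ((0 : ℂ), t)) 0 :=
      (ContinuousLinearMap.inr ℂ ℂ ℂ).analyticAt 0
    have h2 : AnalyticAt ℂ (⇑P.symm) ((0 : ℂ), (0 : ℂ)) := by
      rwa [Prod.mk_zero_zero]
    exact h2.comp h1
  have hγ0 : γ 0 = 0 := by
    have h1 : P.symm (P 0) = 0 := P.left_inv hP0
    rw [hP00] at h1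
    have h2 : ((0 : ℂ), (0 : ℂ)) = (0 : ℂ × ℂ) := Prod.mk_zero_zero
    rw [hγdef]
    simp only [h2]
    exact h1
  -- key step: any nontrivial analytic germ fixed by `psi` coincides with `{hfun = 0}` near `0`
  have key : ∀ X : Set (ℂ × ℂ), IsAnalyticGermAtZero X →
      (∀ U ∈ 𝓝 (0 : ℂ × ℂ), ∃ x ∈ X ∩ U, x ≠ 0) →
      (∀ᶠ z in 𝓝 (0 : ℂ × ℂ), z ∈ X → psi z = z) →
      ∀ᶠ z in 𝓝 (0 : ℂ × ℂ), (z ∈ X ↔ hfun z = 0) := by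
    intro X hXan hXnt hXfix
    obtain ⟨U, hU, N, f, hfanal, hXU⟩ := hXan
    obtain ⟨S₀, hS₀, hS₀fix⟩ := eventually_iff_exists_mem.mp hXfix
    -- membership in `X` forces `hfun z = 0` (on `S₀`)
    have hXh : ∀ z ∈ S₀, z ∈ X → hfun z = 0 := by
      intro z hzS hzX
      have hpsiz : psi z = z := hS₀fix z hzS hzX
      simp [hhdef, hgdef, hpsiz]
    -- a convenient basic neighborhood
    have hnbhd : ∀ T : Set ℂ, T ∈ 𝓝 (0 : ℂ) →
        U ∩ S₀ ∩ P.source ∩ (fun z => (Φ z).2) ⁻¹' T ∈ 𝓝 (0 : ℂ × ℂ) := by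
      intro T hT
      refine Filter.inter_mem (Filter.inter_mem (Filter.inter_mem hU hS₀)
        (P.open_source.mem_nhds hP0)) ?_
      have hcont : ContinuousAt (fun z => (Φ z).2) 0 :=
        continuous_snd.continuousAt.comp hΦanal.continuousAt
      apply hcont.preimage_mem_nhds
      rw [hΦ0]
      exact hT
    -- if `z` is in the basic neighborhood and `hfun z = 0`, then `z = γ ((Φ z).2)`
    have hgam : ∀ z : ℂ × ℂ, z ∈ P.source → hfun z = 0 → γ ((Φ z).2) = z := by
      intro z hzsrc hhz
      have hΦz : Φ z = ((0 : ℂ), (Φ z).2) := by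
        have : (Φ z).1 = 0 := hhz
        rw [← this]
      have h1 : P.symm (P z) = z := P.left_inv hzsrc
      rw [hPcoe] at h1
      calc γ ((Φ z).2) = P.symm ((0 : ℂ), (Φ z).2) := rfl
        _ = P.symm (Φ z) := by rw [← hΦz]
        _ = z := h1
    -- Step 1: each `f j ∘ γ` vanishes identically near `0`
    have hstep1 : ∀ j, ∀ᶠ t in 𝓝 (0 : ℂ), f j (γ t) = 0 := by
      intro j
      have hfγ : AnalyticAt ℂ (fun t => f j (γ t)) 0 := by
        have h1 : AnalyticAt ℂ (f j) (γ 0) := by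
          rw [hγ0]; exact hfanal j 0 (mem_of_mem_nhds hU)
        exact h1.comp hγanal
      rw [← hfγ.frequently_zero_iff_eventually_zero]
      rw [frequently_iff]
      intro S hS
      obtain ⟨T, hT, hTS⟩ := mem_nhdsWithin_iff_exists_mem_nhds_inter.mp hS
      obtain ⟨x, ⟨hxX, hxmem⟩, hxne⟩ := hXnt _ (hnbhd T hT)
      obtain ⟨⟨⟨hxU, hxS₀⟩, hxsrc⟩, hxT⟩ := hxmem
      have hhx : hfun x = 0 := hXh x hxS₀ hxX
      have hγt : γ ((Φ x).2) = x := hgam x hxsrc hhx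
      have htne : (Φ x).2 ≠ 0 := by
        intro hc
        rw [hc, hγ0] at hγt
        exact hxne hγt.symm
      refine ⟨(Φ x).2, hTS ⟨hxT, by simpa using htne⟩, ?_⟩
      rw [hγt]
      have hx' : x ∈ {x ∈ U | ∀ i, f i x = 0} := hXU ▸ ⟨hxX, hxU⟩
      exact hx'.2 j
    have hall : ∀ᶠ t in 𝓝 (0 : ℂ), ∀ j, f j (γ t) = 0 := eventually_all.mpr hstep1
    obtain ⟨E, hE, hEall⟩ := eventually_iff_exists_mem.mp hall
    -- Step 2: conclude the local equality of `X` and `{hfun = 0}`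
    refine eventually_iff_exists_mem.mpr ⟨_, hnbhd E hE, ?_⟩
    rintro z ⟨⟨⟨hzU, hzS₀⟩, hzsrc⟩, hzE⟩
    constructor
    · intro hzX
      exact hXh z hzS₀ hzX
    · intro hhz
      have hγz : γ ((Φ z).2) = z := hgam z hzsrc hhz
      have hfz : ∀ j, f j z = 0 := by
        intro j
        rw [← hγz]
        exact hEall _ hzE j
      have hz' : z ∈ X ∩ U := hXU ▸ (⟨hzU, hfz⟩ : z ∈ {x ∈ U | ∀ i, f i x = 0})
      exact hz'.1
  have hkV := key V hVan hVnt (hfix.mono fun z hz hzV => hz (Or.inl hzV))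
  have hkW := key W hWan hWnt (hfix.mono fun z hz hzW => hz (Or.inr hzW))
  exact hVW ((hkV.and hkW).mono fun z hz => by rw [hz.1, hz.2])
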